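/- Let u : (0,∞) → ℝ be continuously differentiable and compactly supported in (0,∞), and let p ≥ 1 be a real number. Then ∫₀^∞ (u(x) − (1/(2p−1)) x u'(x))² x^{−2p} dx = (1/(2p−1)²) ∫₀^∞ u'(x)² x^{−(2p−2)} dx. -/

import Mathlib

open MeasureTheory

theorem ibp_identity (p : ℝ) (hp : 1 ≤ p) (u : ℝ → ℝ) (hu : ContDiff ℝ 1 u)
    (K : Set ℝ) (hK : IsCompact K) (hKsub : K ⊆ Set.Ioi 0)
    (hsupp : Function.support u ⊆ K) :
    ∫ x in Set.Ioi (0:ℝ), (u x - (1/(2*p-1)) * x * deriv u x)^2 * x ^ (-(2*p)) =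
      (1/(2*p-1)^2) * ∫ x in Set.Ioi (0:ℝ), (deriv u x)^2 * x ^ (-(2*p-2)) := by
  by_cases hKne : K.Nonempty
  case neg =>
    have hu0 : u = fun _ => 0 := by
      funext x
      by_contra h
      exact hKne ⟨x, hsupp h⟩
    simp [hu0]
  obtain ⟨a, haK, ha_lb⟩ := hK.exists_isLeast hKne
  obtain ⟨b, hbK, hb_ub⟩ := hK.exists_isGreatest hKne
  have ha0 : 0 < a := hKsub haK
  have hab : a ≤ b := ha_lb hbK
  have hu0 : ∀ x, x ∉ Set.Icc a b → u x = 0 := by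
    intro x hx
    by_contra h
    have hxK := hsupp h
    exact hx ⟨ha_lb hxK, hb_ub hxK⟩
  have hd0 : ∀ x, x ∉ Set.Icc a b → deriv u x = 0 := by
    intro x hx
    have hev : u =ᶠ[nhds x] fun _ => (0:ℝ) :=
      Filter.eventuallyEq_iff_exists_mem.mpr
        ⟨(Set.Icc a b)ᶜ, isClosed_Icc.isOpen_compl.mem_nhds hx, fun y hy => hu0 y hy⟩
    rw [hev.deriv_eq]
    simp
  set α := a/2 with hαdef
  set β := b+1 with hβdef
  have hα0 : 0 < α := by positivity
  have hαa : α < a := by simp only [hαdef]; linarith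
  have hbβ : b < β := by simp only [hβdef]; linarith
  have hαβ : α ≤ β := by linarith
  have huIcc : Set.uIcc α β = Set.Icc α β := Set.uIcc_of_le hαβ
  have hmem0 : ∀ x ∈ Set.uIcc α β, 0 < x := by
    intro x hx
    rw [huIcc] at hx
    exact lt_of_lt_of_le hα0 hx.1
  -- continuity facts
  have cu : Continuous u := hu.continuous
  have cd : Continuous (deriv u) := hu.continuous_deriv le_rfl
  have crpow : ∀ r : ℝ, ContinuousOn (fun x : ℝ => x ^ r) (Set.uIcc α β) :=
    fun r => ContinuousOn.rpow_const continuousOn_id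
      (fun x hx => Or.inl (ne_of_gt (hmem0 x hx)))
  -- reduce set integrals to interval integrals
  have hred : ∀ f : ℝ → ℝ, (∀ x, x ∉ Set.Icc a b → f x = 0) →
      ∫ x in Set.Ioi (0:ℝ), f x = ∫ x in α..β, f x := by
    intro f hf
    have e1 := setIntegral_eq_integral_of_forall_compl_eq_zero (μ := volume)
        (s := Set.Ioi (0:ℝ)) (f := f)
        (fun x hx => hf x (fun hx' => hx (lt_of_lt_of_le ha0 hx'.1)))
    have e2 := setIntegral_eq_integral_of_forall_compl_eq_zero (μ := volume)
        (s := Set.Ioc α β) (f := f)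
        (fun x hx => hf x (fun hx' => hx ⟨lt_of_lt_of_le hαa hx'.1, le_trans hx'.2 hbβ.le⟩))
    rw [e1, intervalIntegral.integral_of_le hαβ, e2]
  rw [hred _ (fun x hx => by rw [hu0 x hx, hd0 x hx]; ring),
    hred _ (fun x hx => by rw [hd0 x hx]; ring)]
  -- integrability
  have hiA : IntervalIntegrable (fun x => u x ^ 2 * x ^ (-(2*p))) volume α β :=
    (((cu.pow 2).continuousOn).mul (crpow _)).intervalIntegrable
  have hiB : IntervalIntegrable (fun x => u x * deriv u x * x ^ (1-2*p)) volume α β :=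
    (((cu.mul cd).continuousOn).mul (crpow _)).intervalIntegrable
  have hiC : IntervalIntegrable (fun x => (deriv u x) ^ 2 * x ^ (-(2*p-2))) volume α β :=
    (((cd.pow 2).continuousOn).mul (crpow _)).intervalIntegrable
  set A := ∫ x in α..β, u x ^ 2 * x ^ (-(2*p)) with hA
  set B := ∫ x in α..β, u x * deriv u x * x ^ (1-2*p) with hB
  set C := ∫ x in α..β, (deriv u x) ^ 2 * x ^ (-(2*p-2)) with hC
  have hp1 : (0:ℝ) < 2*p - 1 := by linarith
  -- key integration by parts identity
  have key : (2*p-1) * A = 2 * B := by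
    have hderiv : ∀ x ∈ Set.uIcc α β,
        HasDerivAt (fun y => u y ^ 2 * y ^ (1-2*p))
          (2 * (u x * deriv u x * x ^ (1-2*p)) + (1-2*p) * (u x ^ 2 * x ^ (-(2*p)))) x := by
      intro x hx
      have hx0 : 0 < x := hmem0 x hx
      have h1 : HasDerivAt (fun y => u y ^ 2) (2 * u x ^ 1 * deriv u x) x := by
        have := ((hu.differentiable one_ne_zero).differentiableAt (x := x)).hasDerivAt
        simpa using this.fun_pow 2
      have h2 : HasDerivAt (fun y : ℝ => y ^ (1-2*p)) ((1-2*p) * x ^ (1-2*p-1)) x :=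
        Real.hasDerivAt_rpow_const (Or.inl hx0.ne')
      have := h1.mul h2
      refine this.congr_deriv ?_
      rw [show (1-2*p-1) = -(2*p) by ring]
      ring
    have hzero : (∫ x in α..β,
        (2 * (u x * deriv u x * x ^ (1-2*p)) + (1-2*p) * (u x ^ 2 * x ^ (-(2*p))))) = 0 := by
      rw [intervalIntegral.integral_eq_sub_of_hasDerivAt hderiv
        (((hiB.const_mul 2).add (hiA.const_mul (1-2*p))))]
      rw [hu0 α (fun h => absurd h.1 (not_le.mpr hαa)),
        hu0 β (fun h => absurd h.2 (not_le.mpr hbβ))]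
      ring
    rw [intervalIntegral.integral_add (hiB.const_mul 2) (hiA.const_mul (1-2*p)),
      intervalIntegral.integral_const_mul, intervalIntegral.integral_const_mul] at hzero
    linarith
  -- expand the square
  have hexp : (∫ x in α..β, (u x - (1/(2*p-1)) * x * deriv u x)^2 * x ^ (-(2*p)))
      = A - (2 * (1/(2*p-1))) * B + (1/(2*p-1))^2 * C := by
    rw [hA, hB, hC, ← intervalIntegral.integral_const_mul, ← intervalIntegral.integral_const_mul,
      ← intervalIntegral.integral_sub hiA (hiB.const_mul _),
      ← intervalIntegral.integral_add (hiA.sub (hiB.const_mul _)) (hiC.const_mul _)]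
    apply intervalIntegral.integral_congr
    intro x hx
    have hx0 : 0 < x := hmem0 x hx
    have h1 : x ^ (1-2*p) = x * x ^ (-(2*p)) := by
      rw [show (1-2*p) = 1 + -(2*p) by ring, Real.rpow_add hx0, Real.rpow_one]
    have h2 : x ^ (-(2*p-2)) = x ^ 2 * x ^ (-(2*p)) := by
      rw [show (-(2*p-2)) = 2 + -(2*p) by ring, Real.rpow_add hx0,
        show ((2:ℝ)) = ((2:ℕ):ℝ) by norm_num, Real.rpow_natCast]
    simp only [h1, h2]
    ring
  rw [hexp]
  have hne : (2*p-1) ≠ 0 := ne_of_gt hp1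
  have hAB : A = (2 / (2*p-1)) * B := by
    field_simp
    linarith
  rw [hAB]
  field_simp
  ring
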